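/- Assume 0 < ε < 1/2 satisfies both (1/2)·(1 − 2ε)^{−2}·(1 + 2ε) ≤ 1 and 6ε/(1 − 2ε) ≤ 1, that 0 < p ≤ 1 satisfies p^{k−1} B^k ≤ ε·8^{−k} for all k ≥ 2, and that |J_k| ≤ B^k for all k ≥ 2. Then there exists a unique α* ∈ S with f(α*) = α*, and for every starting point α ∈ S the sequence of iterates f^{(n)}(α) converges to α* in the norm ‖·‖ as n → ∞. -/

import Mathlib

open scoped ENNReal NNReal

/-- The norm `‖α‖ = Σ_{k≥2} 2^k |α_k|`, valued in `[0,∞]` so that it is always defined;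
membership in the space `S` below forces it to be finite. -/
noncomputable def seqNorm (α : ℕ → ℝ) : ℝ≥0∞ :=
  ∑' k : ℕ, if 2 ≤ k then (2 : ℝ≥0∞) ^ k * ENNReal.ofReal |α k| else 0

/-- `A(α) = Σ_{k≥2} k α_k`. -/
noncomputable def seqA (α : ℕ → ℝ) : ℝ :=
  ∑' k : ℕ, if 2 ≤ k then (k : ℝ) * α k else 0

/-- The map `f(α)_k = J_k p^k (1 - 2A(α))^{-2k} (1 - 2A(α)/p)^k` for `k ≥ 2`
(entries of index `< 2` are irrelevant and set to `0`). -/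
noncomputable def fMap (p : ℝ) (J : ℕ → ℝ) (α : ℕ → ℝ) : ℕ → ℝ := fun k =>
  if 2 ≤ k then J k * p ^ k * ((1 - 2 * seqA α)⁻¹) ^ (2 * k) * (1 - 2 * seqA α / p) ^ k
  else 0

/-- The set `S = {α : ‖α‖ ≤ p ε}`. -/
def Sset (p ε : ℝ) : Set (ℕ → ℝ) := {α | seqNorm α ≤ ENNReal.ofReal (p * ε)}


-- Auxiliary lemmas

lemma abs_pow_sub_pow_le' {x y M : ℝ} (hx : |x| ≤ M) (hy : |y| ≤ M) :
    ∀ n : ℕ, |x ^ n - y ^ n| ≤ n * M ^ (n - 1) * |x - y| := by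
  have hM : 0 ≤ M := le_trans (abs_nonneg x) hx
  intro n
  induction n with
  | zero => simp
  | succ n ih =>
    have key : x ^ (n+1) - y ^ (n+1) = x ^ n * (x - y) + (x ^ n - y ^ n) * y := by ring
    have h1 : |x ^ (n+1) - y ^ (n+1)| ≤ |x| ^ n * |x - y| + |x ^ n - y ^ n| * |y| := by
      rw [key]
      calc |x ^ n * (x - y) + (x ^ n - y ^ n) * y| ≤ |x ^ n * (x - y)| + |(x ^ n - y ^ n) * y| :=
            abs_add_le _ _
        _ = |x| ^ n * |x - y| + |x ^ n - y ^ n| * |y| := by rw [abs_mul, abs_mul, abs_pow]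
    have h2 : |x| ^ n * |x - y| ≤ M ^ n * |x - y| := by
      have := abs_nonneg x
      gcongr
    have h3 : |x ^ n - y ^ n| * |y| ≤ (n * M ^ (n - 1) * |x - y|) * M := by
      apply mul_le_mul ih hy (abs_nonneg y)
      positivity
    have h4 : (n : ℝ) * M ^ (n - 1) * |x - y| * M ≤ n * M ^ n * |x - y| := by
      rcases Nat.eq_zero_or_pos n with h | h
      · simp [h]
      · have : M ^ (n - 1) * M = M ^ n := by
          rw [← pow_succ]
          congr 1
          omega
        have e : (n : ℝ) * M ^ (n - 1) * |x - y| * M = n * M ^ n * |x - y| := by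
          rw [← this]; ring
        exact le_of_eq e
    have h5 : |x ^ (n+1) - y ^ (n+1)| ≤ M ^ n * |x - y| + n * M ^ n * |x - y| := by
      linarith
    calc |x ^ (n+1) - y ^ (n+1)| ≤ M ^ n * |x - y| + n * M ^ n * |x - y| := h5
      _ = (n + 1) * M ^ n * |x - y| := by ring
      _ = (↑(n+1)) * M ^ ((n+1) - 1) * |x - y| := by push_cast; ring_nf

lemma geom_two_summable {w : ℝ} (h0 : 0 ≤ w) (h1 : w < 1) :
    Summable (fun k : ℕ => if 2 ≤ k then w ^ k else 0) := by
  apply Summable.of_nonneg_of_le (f := fun k => w ^ k)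
  · intro k; split <;> positivity
  · intro k; split
    · exact le_rfl
    · positivity
  · exact summable_geometric_of_lt_one h0 h1

lemma geom_two_tsum {w : ℝ} (h0 : 0 ≤ w) (h1 : w < 1) :
    ∑' k : ℕ, (if 2 ≤ k then w ^ k else (0:ℝ)) = w ^ 2 * (1 - w)⁻¹ := by
  have hs := geom_two_summable h0 h1
  have := Summable.sum_add_tsum_nat_add (f := fun k : ℕ => if 2 ≤ k then w ^ k else (0:ℝ)) 2 hs
  rw [← this]
  have : ∑' (i : ℕ), (if 2 ≤ i + 2 then w ^ (i+2) else (0:ℝ)) = ∑' i : ℕ, w ^ 2 * w ^ i := by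
    apply tsum_congr; intro i
    rw [if_pos (by omega)]
    ring
  rw [this, tsum_mul_left, tsum_geometric_of_lt_one h0 h1]
  simp [Finset.sum_range_succ]
noncomputable def rseq (α : ℕ → ℝ) : ℕ → ℝ := fun k => if 2 ≤ k then 2 ^ k * |α k| else 0

lemma rseq_nonneg (α : ℕ → ℝ) (k : ℕ) : 0 ≤ rseq α k := by
  unfold rseq; split <;> positivity

lemma seqNorm_term_eq (α : ℕ → ℝ) (k : ℕ) :
    (if 2 ≤ k then (2 : ℝ≥0∞) ^ k * ENNReal.ofReal |α k| else 0) = ENNReal.ofReal (rseq α k) := by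
  unfold rseq
  split
  · rw [ENNReal.ofReal_mul (by positivity), ENNReal.ofReal_pow (by norm_num)]
    norm_num
  · simp

lemma seqNorm_eq_ofReal (α : ℕ → ℝ) (h : Summable (rseq α)) :
    seqNorm α = ENNReal.ofReal (∑' k, rseq α k) := by
  unfold seqNorm
  rw [ENNReal.ofReal_tsum_of_nonneg (rseq_nonneg α) h]
  exact tsum_congr (seqNorm_term_eq α)

lemma summable_rseq (α : ℕ → ℝ) (h : seqNorm α ≠ ⊤) : Summable (rseq α) := by
  have h' : (∑' k : ℕ, ENNReal.ofReal (rseq α k)) ≠ ⊤ := by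
    rw [← tsum_congr (seqNorm_term_eq α)]; exact h
  have := ENNReal.summable_toReal h'
  convert this using 2 with k
  rw [ENNReal.toReal_ofReal (rseq_nonneg α k)]

lemma k_le_pow (k : ℕ) (hk : 2 ≤ k) : (k : ℝ) ≤ 2 ^ (k - 1) := by
  have : k ≤ 2 ^ (k - 1) := by
    have h2 := Nat.lt_two_pow_self (n := k - 1)
    omega
  calc (k : ℝ) ≤ ((2:ℕ) ^ (k-1) : ℕ) := by exact_mod_cast this
    _ = 2 ^ (k - 1) := by push_cast; ring

lemma abs_seqA_le (α : ℕ → ℝ) (h : Summable (rseq α)) :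
    |seqA α| ≤ (1 / 2) * ∑' k, rseq α k := by
  have hterm : ∀ k : ℕ, |if 2 ≤ k then (k : ℝ) * α k else 0| ≤ (1/2) * rseq α k := by
    intro k
    unfold rseq
    split
    · next hk =>
      rw [abs_mul, Nat.abs_cast]
      have h1 : (k : ℝ) ≤ 2 ^ (k - 1) := k_le_pow k hk
      have e : (2:ℝ) ^ k = 2 * 2 ^ (k - 1) := by
        rw [← pow_succ']
        congr 1
        omega
      rw [e]
      nlinarith [abs_nonneg (α k)]
    · simp
  have hs2 : Summable (fun k => (1/2) * rseq α k) := h.mul_left _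
  have hsabs : Summable (fun k : ℕ => |if 2 ≤ k then (k : ℝ) * α k else 0|) :=
    Summable.of_nonneg_of_le (fun k => abs_nonneg _) hterm hs2
  have h0 : |seqA α| ≤ ∑' k : ℕ, |if 2 ≤ k then (k : ℝ) * α k else 0| := by
    have := norm_tsum_le_tsum_norm (f := fun k : ℕ => if 2 ≤ k then (k : ℝ) * α k else 0)
      (by simpa [Real.norm_eq_abs] using hsabs)
    simpa [Real.norm_eq_abs, seqA] using this
  calc |seqA α| ≤ ∑' k : ℕ, |if 2 ≤ k then (k : ℝ) * α k else 0| := h0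
    _ ≤ ∑' k, (1/2) * rseq α k := Summable.tsum_le_tsum hterm hsabs hs2
    _ = (1/2) * ∑' k, rseq α k := tsum_mul_left

lemma seqNorm_le_of (γ s : ℕ → ℝ) (hs : Summable s) (h0 : ∀ k, 0 ≤ s k)
    (h : ∀ k, 2 ≤ k → 2 ^ k * |γ k| ≤ s k) : seqNorm γ ≤ ENNReal.ofReal (∑' k, s k) := by
  rw [ENNReal.ofReal_tsum_of_nonneg h0 hs]
  unfold seqNorm
  apply ENNReal.tsum_le_tsum
  intro k
  rw [seqNorm_term_eq]
  apply ENNReal.ofReal_le_ofReal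
  unfold rseq
  split
  · next hk => exact h k hk
  · exact h0 k

noncomputable def phiF (p a : ℝ) : ℝ := ((1 - 2*a)⁻¹)^2 * (1 - 2*a/p)

lemma phi_bound {p ε a : ℝ} (hε0 : 0 < ε) (hε2 : ε < 1/2)
    (hc1 : ((1 - 2*ε)⁻¹)^2 * (1 + 2*ε) ≤ 2)
    (hp0 : 0 < p) (hp1 : p ≤ 1) (ha : |a| ≤ p*ε/2) : |phiF p a| ≤ 2 := by
  obtain ⟨ha1, ha2⟩ := abs_le.mp ha
  have hpε : p*ε ≤ ε := by nlinarith
  have h2ε : 0 < 1 - 2*ε := by linarith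
  have hu0 : 1 - 2*ε ≤ 1 - 2*a := by nlinarith
  have hu0' : 0 < 1 - 2*a := by linarith
  have hiu : (1 - 2*a)⁻¹ ≤ (1 - 2*ε)⁻¹ := by
    apply inv_anti₀ h2ε hu0
  have hiu0 : 0 < (1 - 2*a)⁻¹ := by positivity
  have hap : |a/p| ≤ ε/2 := by
    rw [abs_div, abs_of_pos hp0, div_le_iff₀ hp0]
    calc |a| ≤ p*ε/2 := ha
      _ = ε/2*p := by ring
  obtain ⟨hap1, hap2⟩ := abs_le.mp hap
  have habs2 : |1 - 2*a/p| ≤ 1 + 2*ε := by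
    rw [abs_le, mul_div_assoc]
    constructor <;> nlinarith
  have e : |phiF p a| = |(1 - 2*a)⁻¹|^2 * |1 - 2*a/p| := by
    rw [phiF, abs_mul, abs_pow]
  rw [e, abs_of_pos hiu0]
  calc (1 - 2*a)⁻¹^2 * |1 - 2*a/p| ≤ ((1 - 2*ε)⁻¹)^2 * (1 + 2*ε) := by
        apply mul_le_mul _ habs2 (abs_nonneg _) (by positivity)
        exact pow_le_pow_left₀ (le_of_lt hiu0) hiu 2
    _ ≤ 2 := hc1


set_option maxHeartbeats 1000000 in
lemma phi_lip {p ε a b : ℝ} (hε0 : 0 < ε) (hε8 : ε ≤ 1/8)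
    (hp0 : 0 < p) (hp1 : p ≤ 1) (ha : |a| ≤ p*ε/2) (hb : |b| ≤ p*ε/2) :
    p * ε * |phiF p a - phiF p b| ≤ (243/128) * |a - b| := by
  obtain ⟨ha1, ha2⟩ := abs_le.mp ha
  obtain ⟨hb1, hb2⟩ := abs_le.mp hb
  have ht0 : 0 < p*ε := by positivity
  have ht8 : p*ε ≤ 1/8 := by nlinarith
  have hu1 : (7:ℝ)/8 ≤ 1 - 2*a := by nlinarith
  have hu2 : 1 - 2*a ≤ 9/8 := by nlinarith
  have hv1 : (7:ℝ)/8 ≤ 1 - 2*b := by nlinarith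
  have hv2 : 1 - 2*b ≤ 9/8 := by nlinarith
  have hu0 : (0:ℝ) < 1 - 2*a := by linarith
  have hv0 : (0:ℝ) < 1 - 2*b := by linarith
  have hune : (1 - 2*a) ≠ 0 := ne_of_gt hu0
  have hvne : (1 - 2*b) ≠ 0 := ne_of_gt hv0
  have hpne : p ≠ 0 := ne_of_gt hp0
  have key : phiF p a - phiF p b =
      ((a-b) * (2*((1-2*a)+(1-2*b)) - (2/p)*((1-2*b)^2 + 2*b*((1-2*a)+(1-2*b)))))
        * (((1-2*a)⁻¹)^2 * ((1-2*b)⁻¹)^2) := by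
    unfold phiF
    field_simp
    ring
  have hG : |2*((1-2*a)+(1-2*b)) - (2/p)*((1-2*b)^2 + 2*b*((1-2*a)+(1-2*b)))|
      ≤ 9/2 + (2/p)*(81/64 + (9/4)*(p*ε)) := by
    have h1 : |2*((1-2*a)+(1-2*b))| ≤ 9/2 := by
      rw [abs_mul, abs_of_pos (by norm_num : (0:ℝ) < 2),
        abs_of_pos (by linarith : (0:ℝ) < (1-2*a)+(1-2*b))]
      linarith
    have h2 : |(2/p)*((1-2*b)^2 + 2*b*((1-2*a)+(1-2*b)))| ≤ (2/p)*(81/64 + (9/4)*(p*ε)) := by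
      rw [abs_mul, abs_of_pos (by positivity : (0:ℝ) < 2/p)]
      apply mul_le_mul_of_nonneg_left _ (by positivity)
      calc |(1-2*b)^2 + 2*b*((1-2*a)+(1-2*b))|
          ≤ |(1-2*b)^2| + |2*b*((1-2*a)+(1-2*b))| := abs_add_le _ _
        _ ≤ 81/64 + (9/4)*(p*ε) := by
          apply add_le_add
          · rw [abs_of_pos (by positivity)]
            nlinarith
          · rw [abs_mul]
            have e1 : |2*b| ≤ p*ε := by
              rw [abs_mul, abs_of_pos (by norm_num : (0:ℝ)<2)]
              linarith
            have e2 : |(1-2*a)+(1-2*b)| ≤ 9/4 := by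
              rw [abs_of_pos (by linarith)]; linarith
            calc |2*b| * |(1-2*a)+(1-2*b)| ≤ (p*ε) * (9/4) :=
                  mul_le_mul e1 e2 (abs_nonneg _) (le_of_lt ht0)
              _ = (9/4)*(p*ε) := by ring
    calc |2*((1-2*a)+(1-2*b)) - (2/p)*((1-2*b)^2 + 2*b*((1-2*a)+(1-2*b)))|
        ≤ |2*((1-2*a)+(1-2*b))| + |(2/p)*((1-2*b)^2 + 2*b*((1-2*a)+(1-2*b)))| := abs_sub _ _
      _ ≤ 9/2 + (2/p)*(81/64 + (9/4)*(p*ε)) := add_le_add h1 h2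
  have hinva : ((1-2*a)⁻¹)^2 ≤ (8/7)^2 := by
    apply pow_le_pow_left₀ (by positivity)
    calc (1-2*a)⁻¹ ≤ (7/8:ℝ)⁻¹ := inv_anti₀ (by norm_num) hu1
      _ = 8/7 := by norm_num
  have hinvb : ((1-2*b)⁻¹)^2 ≤ (8/7)^2 := by
    apply pow_le_pow_left₀ (by positivity)
    calc (1-2*b)⁻¹ ≤ (7/8:ℝ)⁻¹ := inv_anti₀ (by norm_num) hv1
      _ = 8/7 := by norm_num
  set G := 2*((1-2*a)+(1-2*b)) - (2/p)*((1-2*b)^2 + 2*b*((1-2*a)+(1-2*b))) with hGdef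
  set Gb : ℝ := 9/2 + (2/p)*(81/64 + (9/4)*(p*ε)) with hGbdef
  have hGb0 : 0 ≤ Gb := by positivity
  have step1 : |phiF p a - phiF p b| ≤ (|a-b| * Gb) * ((8/7)^2 * (8/7)^2) := by
    rw [key, abs_mul]
    have i1 : |(a-b) * G| ≤ |a-b| * Gb := by
      rw [abs_mul]
      exact mul_le_mul_of_nonneg_left hG (abs_nonneg _)
    have i2 : |((1-2*a)⁻¹)^2 * ((1-2*b)⁻¹)^2| ≤ (8/7)^2 * (8/7)^2 := by
      rw [abs_mul, abs_of_pos (by positivity : (0:ℝ) < ((1-2*a)⁻¹)^2),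
        abs_of_pos (by positivity : (0:ℝ) < ((1-2*b)⁻¹)^2)]
      exact mul_le_mul hinva hinvb (by positivity) (by positivity)
    exact mul_le_mul i1 i2 (abs_nonneg _) (by positivity)
  have hGbval : p*ε*Gb ≤ 243/256 := by
    have e : p*ε*Gb = (9/2)*(p*ε) + 2*ε*(81/64 + (9/4)*(p*ε)) := by
      rw [hGbdef]; field_simp
    rw [e]
    nlinarith
  have hGbp : 0 ≤ p*ε*Gb := by positivity
  calc p * ε * |phiF p a - phiF p b| ≤ p * ε * ((|a-b| * Gb) * ((8/7)^2 * (8/7)^2)) :=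
        mul_le_mul_of_nonneg_left step1 (le_of_lt ht0)
    _ = (p*ε*Gb) * ((8/7)^2*(8/7)^2) * |a-b| := by ring
    _ ≤ (243/128) * |a - b| := by
        apply mul_le_mul_of_nonneg_right _ (abs_nonneg _)
        nlinarith
noncomputable def hF (p : ℝ) (J : ℕ → ℝ) (a : ℝ) : ℝ :=
  ∑' k : ℕ, if 2 ≤ k then (k:ℝ) * (J k * p ^ k * phiF p a ^ k) else 0

noncomputable def alphaOf (p : ℝ) (J : ℕ → ℝ) (a : ℝ) : ℕ → ℝ := fun k =>
  if 2 ≤ k then J k * p ^ k * phiF p a ^ k else 0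

lemma fMap_eq_alphaOf (p : ℝ) (J : ℕ → ℝ) (α : ℕ → ℝ) :
    fMap p J α = alphaOf p J (seqA α) := by
  funext k
  unfold fMap alphaOf
  split
  · rw [phiF, mul_pow, ← pow_mul]
    ring
  · rfl

lemma seqA_alphaOf (p : ℝ) (J : ℕ → ℝ) (a : ℝ) :
    seqA (alphaOf p J a) = hF p J a := by
  unfold seqA hF alphaOf
  apply tsum_congr
  intro k
  by_cases hk : 2 ≤ k <;> simp [hk]

lemma summable_ite_const_mul (C : ℝ) {w : ℝ} (h0 : 0 ≤ w) (h1 : w < 1) :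
    Summable (fun k : ℕ => if 2 ≤ k then C * w ^ k else 0) := by
  have e : (fun k : ℕ => if 2 ≤ k then C * w ^ k else 0)
      = fun k : ℕ => C * (if 2 ≤ k then w ^ k else 0) := by
    funext k; split <;> simp
  rw [e]
  exact (geom_two_summable h0 h1).mul_left C

lemma tsum_ite_const_mul (C : ℝ) {w : ℝ} (h0 : 0 ≤ w) (h1 : w < 1) :
    ∑' k : ℕ, (if 2 ≤ k then C * w ^ k else 0) = C * (w ^ 2 * (1 - w)⁻¹) := by
  have e : (fun k : ℕ => if 2 ≤ k then C * w ^ k else 0)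
      = fun k : ℕ => C * (if 2 ≤ k then w ^ k else 0) := by
    funext k; split <;> simp
  rw [e, tsum_mul_left, geom_two_tsum h0 h1]

lemma k_half_pow (k : ℕ) (hk : 2 ≤ k) : (k:ℝ) * (1/2)^k ≤ (8/9) * (3/4)^k := by
  induction k, hk using Nat.le_induction with
  | base => norm_num
  | succ k hk ih =>
    have hpos : (0:ℝ) < (1/2)^k := by positivity
    have h1 : ((k:ℝ)+1) ≤ (3/2)*k := by
      have : (2:ℝ) ≤ k := by exact_mod_cast hk
      linarith
    push_cast
    rw [pow_succ, pow_succ]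
    nlinarith [pow_nonneg (by norm_num : (0:ℝ) ≤ 3/4) k]

section core

variable {p ε B : ℝ} {J : ℕ → ℝ}

lemma term_bd (hp0 : 0 < p)
    (hpB : ∀ k : ℕ, 2 ≤ k → p ^ (k - 1) * B ^ k ≤ ε * (8 : ℝ)⁻¹ ^ k)
    (hJ : ∀ k : ℕ, 2 ≤ k → |J k| ≤ B ^ k)
    {a : ℝ} (phi2 : |phiF p a| ≤ 2) (k : ℕ) (hk : 2 ≤ k) :
    |J k * p ^ k * phiF p a ^ k| ≤ (p * ε) * (1/4) ^ k := by
  have hBpos : (0:ℝ) ≤ B ^ k := le_trans (abs_nonneg _) (hJ k hk)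
  have h1 : |J k * p ^ k * phiF p a ^ k| ≤ B ^ k * p ^ k * 2 ^ k := by
    rw [abs_mul, abs_mul, abs_pow, abs_pow, abs_of_pos hp0]
    apply mul_le_mul (mul_le_mul (hJ k hk) le_rfl (by positivity) hBpos)
      (pow_le_pow_left₀ (abs_nonneg _) phi2 k) (by positivity) (by positivity)
  have h2 : B ^ k * p ^ k = p * (p ^ (k-1) * B ^ k) := by
    have : p ^ k = p * p ^ (k - 1) := by
      rw [← pow_succ']
      congr 1
      omega
    rw [this]; ring
  have h3 : B ^ k * p ^ k * 2 ^ k ≤ (p * (ε * (8:ℝ)⁻¹ ^ k)) * 2 ^ k := by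
    rw [h2]
    apply mul_le_mul_of_nonneg_right _ (by positivity)
    exact mul_le_mul_of_nonneg_left (hpB k hk) (le_of_lt hp0)
  have h4 : (p * (ε * (8:ℝ)⁻¹ ^ k)) * 2 ^ k = (p * ε) * (1/4) ^ k := by
    rw [show ((1:ℝ)/4) = 8⁻¹ * 2 by norm_num, mul_pow]
    ring
  linarith
end core
section core2

variable {p ε B : ℝ} {J : ℕ → ℝ}

lemma pow_id1 (k : ℕ) (hk : 2 ≤ k) : (2:ℝ)^(k-1) * ((1:ℝ)/4)^k = (1/2) * (1/2)^k := by
  have h2k : (2:ℝ)^k = 2*2^(k-1) := by rw [← pow_succ']; congr 1; omega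
  have hq : ((1:ℝ)/4)^k = ((2:ℝ)^k)⁻¹ * ((1:ℝ)/2)^k := by
    rw [show ((1:ℝ)/4) = 2⁻¹*(1/2) by norm_num, mul_pow, inv_pow]
  have hne : (2:ℝ)^(k-1) ≠ 0 := by positivity
  rw [hq, h2k]
  field_simp

lemma pow_id2 (k : ℕ) (hk : 2 ≤ k) : (2:ℝ)^(k-1) * ((8:ℝ)⁻¹)^k = (1/2) * ((1:ℝ)/4)^k := by
  have h2k : (2:ℝ)^k = 2*2^(k-1) := by rw [← pow_succ']; congr 1; omega
  have hq : ((8:ℝ)⁻¹)^k = ((2:ℝ)^k)⁻¹ * ((1:ℝ)/4)^k := by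
    rw [show ((8:ℝ)⁻¹) = 2⁻¹*(1/4) by norm_num, mul_pow, inv_pow]
  have hne : (2:ℝ)^(k-1) ≠ 0 := by positivity
  rw [hq, h2k]
  field_simp

lemma pow_id3 (k : ℕ) : (2:ℝ)^k * ((1:ℝ)/4)^k = (1/2)^k := by
  rw [← mul_pow]; norm_num

lemma k_half_le (k : ℕ) (hk : 2 ≤ k) : (k:ℝ) * (1/2)^k ≤ 1/2 := by
  have h1 : (k:ℝ) ≤ 2^(k-1) := k_le_pow k hk
  have h2 : (2:ℝ)^(k-1) * ((1:ℝ)/2)^k = 1/2 := by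
    have h2k : (2:ℝ)^k = 2*2^(k-1) := by rw [← pow_succ']; congr 1; omega
    have hq : ((1:ℝ)/2)^k = ((2:ℝ)^k)⁻¹ := by rw [one_div, inv_pow]
    have hne : (2:ℝ)^(k-1) ≠ 0 := by positivity
    rw [hq, h2k]
    field_simp
  calc (k:ℝ) * (1/2)^k ≤ 2^(k-1) * (1/2)^k := by
        apply mul_le_mul_of_nonneg_right h1 (by positivity)
    _ = 1/2 := h2

lemma hF_term_abs (hp0 : 0 < p) (hε0 : 0 < ε)
    (hpB : ∀ k : ℕ, 2 ≤ k → p ^ (k - 1) * B ^ k ≤ ε * (8 : ℝ)⁻¹ ^ k)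
    (hJ : ∀ k : ℕ, 2 ≤ k → |J k| ≤ B ^ k)
    {a : ℝ} (phi2 : |phiF p a| ≤ 2) (k : ℕ) :
    |if 2 ≤ k then (k:ℝ) * (J k * p ^ k * phiF p a ^ k) else 0|
      ≤ (if 2 ≤ k then (p*ε/2) * (1/2)^k else 0) := by
  by_cases hk : 2 ≤ k
  · rw [if_pos hk, if_pos hk, abs_mul, Nat.abs_cast]
    have h1 := term_bd hp0 hpB hJ phi2 k hk
    have h2 : (k:ℝ) ≤ 2^(k-1) := k_le_pow k hk
    have e : (2:ℝ)^(k-1) * ((p*ε)*(1/4)^k) = (p*ε/2)*(1/2)^k := by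
      rw [show (2:ℝ)^(k-1) * ((p*ε)*(1/4)^k) = (p*ε)*((2:ℝ)^(k-1)*((1:ℝ)/4)^k) from by ring,
        pow_id1 k hk]
      ring
    calc (k:ℝ) * |J k * p ^ k * phiF p a ^ k| ≤ 2^(k-1) * ((p*ε)*(1/4)^k) := by
          apply mul_le_mul h2 h1 (abs_nonneg _) (by positivity)
      _ = (p*ε/2)*(1/2)^k := e
  · rw [if_neg hk, if_neg hk, abs_zero]

lemma hF_summable (hp0 : 0 < p) (hε0 : 0 < ε)
    (hpB : ∀ k : ℕ, 2 ≤ k → p ^ (k - 1) * B ^ k ≤ ε * (8 : ℝ)⁻¹ ^ k)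
    (hJ : ∀ k : ℕ, 2 ≤ k → |J k| ≤ B ^ k)
    {a : ℝ} (phi2 : |phiF p a| ≤ 2) :
    Summable (fun k : ℕ => if 2 ≤ k then (k:ℝ) * (J k * p ^ k * phiF p a ^ k) else 0) := by
  apply Summable.of_abs
  apply Summable.of_nonneg_of_le (fun k => abs_nonneg _) (hF_term_abs hp0 hε0 hpB hJ phi2)
  exact summable_ite_const_mul (p*ε/2) (by norm_num) (by norm_num)

lemma hF_bound (hp0 : 0 < p) (hε0 : 0 < ε)
    (hpB : ∀ k : ℕ, 2 ≤ k → p ^ (k - 1) * B ^ k ≤ ε * (8 : ℝ)⁻¹ ^ k)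
    (hJ : ∀ k : ℕ, 2 ≤ k → |J k| ≤ B ^ k)
    {a : ℝ} (phi2 : |phiF p a| ≤ 2) : |hF p J a| ≤ p * ε / 4 := by
  have hsabs : Summable (fun k : ℕ => |if 2 ≤ k then (k:ℝ) * (J k * p ^ k * phiF p a ^ k) else 0|) := by
    apply Summable.of_nonneg_of_le (fun k => abs_nonneg _) (hF_term_abs hp0 hε0 hpB hJ phi2)
    exact summable_ite_const_mul (p*ε/2) (by norm_num) (by norm_num)
  have h0 : |hF p J a| ≤ ∑' k : ℕ, |if 2 ≤ k then (k:ℝ) * (J k * p ^ k * phiF p a ^ k) else 0| := by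
    have := norm_tsum_le_tsum_norm
      (f := fun k : ℕ => if 2 ≤ k then (k:ℝ) * (J k * p ^ k * phiF p a ^ k) else 0)
      (by simpa [Real.norm_eq_abs] using hsabs)
    simpa [Real.norm_eq_abs, hF] using this
  have h1 : ∑' k : ℕ, |if 2 ≤ k then (k:ℝ) * (J k * p ^ k * phiF p a ^ k) else 0|
      ≤ ∑' k : ℕ, (if 2 ≤ k then (p*ε/2) * (1/2)^k else 0) :=
    Summable.tsum_le_tsum (hF_term_abs hp0 hε0 hpB hJ phi2) hsabs
      (summable_ite_const_mul (p*ε/2) (by norm_num) (by norm_num))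
  have h2 : ∑' k : ℕ, (if 2 ≤ k then (p*ε/2) * ((1:ℝ)/2)^k else 0) = p*ε/4 := by
    rw [tsum_ite_const_mul (p*ε/2) (by norm_num : (0:ℝ) ≤ 1/2) (by norm_num : (1:ℝ)/2 < 1)]
    norm_num
    linarith
  linarith

end core2
section core3

variable {p ε B : ℝ} {J : ℕ → ℝ}

lemma pBk_le (hp0 : 0 < p)
    (hpB : ∀ k : ℕ, 2 ≤ k → p ^ (k - 1) * B ^ k ≤ ε * (8 : ℝ)⁻¹ ^ k)
    (k : ℕ) (hk : 2 ≤ k) : B ^ k * p ^ k ≤ p * ε * (8:ℝ)⁻¹ ^ k := by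
  have h2 : B ^ k * p ^ k = p * (p ^ (k-1) * B ^ k) := by
    have : p ^ k = p * p ^ (k - 1) := by
      rw [← pow_succ']; congr 1; omega
    rw [this]; ring
  rw [h2]
  calc p * (p ^ (k-1) * B ^ k) ≤ p * (ε * (8:ℝ)⁻¹ ^ k) :=
        mul_le_mul_of_nonneg_left (hpB k hk) (le_of_lt hp0)
    _ = p * ε * (8:ℝ)⁻¹ ^ k := by ring

/-- Per-index bound on the difference of `alphaOf`-type terms. -/
lemma term_diff_bd (hε0 : 0 < ε) (hε8 : ε ≤ 1/8)
    (hp0 : 0 < p) (hp1 : p ≤ 1)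
    (hpB : ∀ k : ℕ, 2 ≤ k → p ^ (k - 1) * B ^ k ≤ ε * (8 : ℝ)⁻¹ ^ k)
    (hJ : ∀ k : ℕ, 2 ≤ k → |J k| ≤ B ^ k)
    {a b : ℝ} (ha : |a| ≤ p*ε/2) (hb : |b| ≤ p*ε/2)
    (phi2a : |phiF p a| ≤ 2) (phi2b : |phiF p b| ≤ 2)
    (k : ℕ) (hk : 2 ≤ k) :
    |J k * p ^ k * phiF p a ^ k - J k * p ^ k * phiF p b ^ k|
      ≤ (243/128) * (k:ℝ) * 2^(k-1) * (8:ℝ)⁻¹ ^ k * |a - b| := by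
  have hd1 : |phiF p a ^ k - phiF p b ^ k| ≤ (k:ℝ) * 2^(k-1) * |phiF p a - phiF p b| :=
    abs_pow_sub_pow_le' phi2a phi2b k
  have hd2 : p * ε * |phiF p a - phiF p b| ≤ (243/128) * |a - b| :=
    phi_lip hε0 hε8 hp0 hp1 ha hb
  have e : J k * p ^ k * phiF p a ^ k - J k * p ^ k * phiF p b ^ k
      = (J k * p ^ k) * (phiF p a ^ k - phiF p b ^ k) := by ring
  rw [e, abs_mul]
  have h1 : |J k * p ^ k| ≤ B ^ k * p ^ k := by
    rw [abs_mul, abs_pow, abs_of_pos hp0]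
    exact mul_le_mul_of_nonneg_right (hJ k hk) (by positivity)
  have h2 : B ^ k * p ^ k ≤ p * ε * (8:ℝ)⁻¹ ^ k := pBk_le hp0 hpB k hk
  calc |J k * p ^ k| * |phiF p a ^ k - phiF p b ^ k|
      ≤ (p * ε * (8:ℝ)⁻¹ ^ k) * ((k:ℝ) * 2^(k-1) * |phiF p a - phiF p b|) := by
        apply mul_le_mul (le_trans h1 h2) hd1 (abs_nonneg _) (by positivity)
    _ = ((k:ℝ) * 2^(k-1) * (8:ℝ)⁻¹ ^ k) * (p * ε * |phiF p a - phiF p b|) := by ring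
    _ ≤ ((k:ℝ) * 2^(k-1) * (8:ℝ)⁻¹ ^ k) * ((243/128) * |a - b|) := by
        apply mul_le_mul_of_nonneg_left hd2 (by positivity)
    _ = (243/128) * (k:ℝ) * 2^(k-1) * (8:ℝ)⁻¹ ^ k * |a - b| := by ring

lemma numeric_k2 (k : ℕ) (hk : 2 ≤ k) :
    (k:ℝ) * ((k:ℝ) * 2^(k-1) * (8:ℝ)⁻¹ ^ k) ≤ (2/9) * (3/4)^k := by
  have e1 : (2:ℝ)^(k-1) * ((8:ℝ)⁻¹)^k = (1/2) * ((1:ℝ)/4)^k := pow_id2 k hk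
  have e2 : ((1:ℝ)/4)^k = (1/2)^k * (1/2)^k := by
    rw [show ((1:ℝ)/4) = (1/2)*(1/2) by norm_num, mul_pow]
  have h1 : (k:ℝ) * (1/2)^k ≤ 1/2 := k_half_le k hk
  have h2 : (k:ℝ) * (1/2)^k ≤ (8/9) * (3/4)^k := k_half_pow k hk
  have e : (k:ℝ) * ((k:ℝ) * 2^(k-1) * (8:ℝ)⁻¹ ^ k)
      = (1/2) * (((k:ℝ) * (1/2)^k) * ((k:ℝ) * (1/2)^k)) := by
    rw [show (k:ℝ) * ((k:ℝ) * 2^(k-1) * (8:ℝ)⁻¹ ^ k)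
        = (k:ℝ) * (k:ℝ) * ((2:ℝ)^(k-1) * ((8:ℝ)⁻¹)^k) from by ring, e1, e2]
    ring
  rw [e]
  have hk0 : (0:ℝ) ≤ (k:ℝ) * (1/2)^k := by positivity
  nlinarith [pow_nonneg (by norm_num : (0:ℝ) ≤ 3/4) k]

lemma hF_lip (hε0 : 0 < ε) (hε8 : ε ≤ 1/8)
    (hp0 : 0 < p) (hp1 : p ≤ 1)
    (hpB : ∀ k : ℕ, 2 ≤ k → p ^ (k - 1) * B ^ k ≤ ε * (8 : ℝ)⁻¹ ^ k)
    (hJ : ∀ k : ℕ, 2 ≤ k → |J k| ≤ B ^ k)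
    {a b : ℝ} (ha : |a| ≤ p*ε/2) (hb : |b| ≤ p*ε/2)
    (phi2a : |phiF p a| ≤ 2) (phi2b : |phiF p b| ≤ 2) :
    |hF p J a - hF p J b| ≤ (243/256) * |a - b| := by
  have hsa := hF_summable hp0 hε0 hpB hJ phi2a
  have hsb := hF_summable hp0 hε0 hpB hJ phi2b
  have hdiff : hF p J a - hF p J b
      = ∑' k : ℕ, ((if 2 ≤ k then (k:ℝ) * (J k * p ^ k * phiF p a ^ k) else 0)
          - (if 2 ≤ k then (k:ℝ) * (J k * p ^ k * phiF p b ^ k) else 0)) := by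
    rw [Summable.tsum_sub hsa hsb]; rfl
  have htermabs : ∀ k : ℕ,
      |(if 2 ≤ k then (k:ℝ) * (J k * p ^ k * phiF p a ^ k) else 0)
        - (if 2 ≤ k then (k:ℝ) * (J k * p ^ k * phiF p b ^ k) else 0)|
      ≤ (if 2 ≤ k then ((27:ℝ)/64) * |a-b| * (3/4)^k else 0) := by
    intro k
    by_cases hk : 2 ≤ k
    · rw [if_pos hk, if_pos hk, if_pos hk]
      have e : (k:ℝ) * (J k * p ^ k * phiF p a ^ k) - (k:ℝ) * (J k * p ^ k * phiF p b ^ k)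
          = (k:ℝ) * (J k * p ^ k * phiF p a ^ k - J k * p ^ k * phiF p b ^ k) := by ring
      rw [e, abs_mul, Nat.abs_cast]
      calc (k:ℝ) * |J k * p ^ k * phiF p a ^ k - J k * p ^ k * phiF p b ^ k|
          ≤ (k:ℝ) * ((243/128) * (k:ℝ) * 2^(k-1) * (8:ℝ)⁻¹ ^ k * |a - b|) := by
            apply mul_le_mul_of_nonneg_left
              (term_diff_bd hε0 hε8 hp0 hp1 hpB hJ ha hb phi2a phi2b k hk) (by positivity)
        _ = ((k:ℝ) * ((k:ℝ) * 2^(k-1) * (8:ℝ)⁻¹ ^ k)) * ((243/128) * |a - b|) := by ring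
        _ ≤ ((2/9) * (3/4)^k) * ((243/128) * |a - b|) := by
            apply mul_le_mul_of_nonneg_right (numeric_k2 k hk) (by positivity)
        _ = ((27:ℝ)/64) * |a-b| * (3/4)^k := by ring
    · rw [if_neg hk, if_neg hk, if_neg hk, sub_zero, abs_zero]
  have hsdom := summable_ite_const_mul (((27:ℝ)/64) * |a-b|) (by norm_num : (0:ℝ) ≤ 3/4)
    (by norm_num : (3:ℝ)/4 < 1)
  have hsabs : Summable (fun k : ℕ =>
      |(if 2 ≤ k then (k:ℝ) * (J k * p ^ k * phiF p a ^ k) else 0)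
        - (if 2 ≤ k then (k:ℝ) * (J k * p ^ k * phiF p b ^ k) else 0)|) :=
    Summable.of_nonneg_of_le (fun k => abs_nonneg _) htermabs hsdom
  have h0 : |hF p J a - hF p J b|
      ≤ ∑' k : ℕ, |(if 2 ≤ k then (k:ℝ) * (J k * p ^ k * phiF p a ^ k) else 0)
        - (if 2 ≤ k then (k:ℝ) * (J k * p ^ k * phiF p b ^ k) else 0)| := by
    rw [hdiff]
    have := norm_tsum_le_tsum_norm
      (f := fun k : ℕ => (if 2 ≤ k then (k:ℝ) * (J k * p ^ k * phiF p a ^ k) else 0)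
        - (if 2 ≤ k then (k:ℝ) * (J k * p ^ k * phiF p b ^ k) else 0))
      (by simpa [Real.norm_eq_abs] using hsabs)
    simpa [Real.norm_eq_abs] using this
  have h1 := Summable.tsum_le_tsum htermabs hsabs hsdom
  have h2 : ∑' k : ℕ, (if 2 ≤ k then ((27:ℝ)/64) * |a-b| * (3/4)^k else 0)
      = (243/256) * |a-b| := by
    rw [tsum_ite_const_mul (((27:ℝ)/64) * |a-b|) (by norm_num : (0:ℝ) ≤ 3/4)
      (by norm_num : (3:ℝ)/4 < 1)]
    norm_num
    ring
  linarith

end core3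
section core4

variable {p ε B : ℝ} {J : ℕ → ℝ}

lemma alphaOf_norm (hp0 : 0 < p) (hε0 : 0 < ε)
    (hpB : ∀ k : ℕ, 2 ≤ k → p ^ (k - 1) * B ^ k ≤ ε * (8 : ℝ)⁻¹ ^ k)
    (hJ : ∀ k : ℕ, 2 ≤ k → |J k| ≤ B ^ k)
    {a : ℝ} (phi2 : |phiF p a| ≤ 2) :
    seqNorm (alphaOf p J a) ≤ ENNReal.ofReal (p * ε / 2) := by
  have hsum := summable_ite_const_mul (p*ε) (by norm_num : (0:ℝ) ≤ 1/2) (by norm_num : (1:ℝ)/2 < 1)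
  have hle := seqNorm_le_of (alphaOf p J a) (fun k => if 2 ≤ k then (p*ε) * (1/2)^k else 0)
    hsum (by intro k; split <;> positivity) ?_
  · have h2 : ∑' k : ℕ, (if 2 ≤ k then (p*ε) * ((1:ℝ)/2)^k else 0) = p*ε/2 := by
      rw [tsum_ite_const_mul (p*ε) (by norm_num : (0:ℝ) ≤ 1/2) (by norm_num : (1:ℝ)/2 < 1)]
      norm_num
      linarith
    rwa [h2] at hle
  · intro k hk
    rw [if_pos hk]
    unfold alphaOf
    rw [if_pos hk]
    calc (2:ℝ)^k * |J k * p ^ k * phiF p a ^ k| ≤ (2:ℝ)^k * ((p*ε) * (1/4)^k) := by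
          apply mul_le_mul_of_nonneg_left (term_bd hp0 hpB hJ phi2 k hk) (by positivity)
      _ = (p*ε) * ((2:ℝ)^k * ((1:ℝ)/4)^k) := by ring
      _ = (p*ε) * (1/2)^k := by rw [pow_id3]

lemma alphaOf_diff_norm (hε0 : 0 < ε) (hε8 : ε ≤ 1/8)
    (hp0 : 0 < p) (hp1 : p ≤ 1)
    (hpB : ∀ k : ℕ, 2 ≤ k → p ^ (k - 1) * B ^ k ≤ ε * (8 : ℝ)⁻¹ ^ k)
    (hJ : ∀ k : ℕ, 2 ≤ k → |J k| ≤ B ^ k)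
    {a b : ℝ} (ha : |a| ≤ p*ε/2) (hb : |b| ≤ p*ε/2)
    (phi2a : |phiF p a| ≤ 2) (phi2b : |phiF p b| ≤ 2) :
    seqNorm (fun k => alphaOf p J a k - alphaOf p J b k)
      ≤ ENNReal.ofReal ((243/128) * |a - b|) := by
  have hsum := summable_ite_const_mul ((27/32) * |a-b|) (by norm_num : (0:ℝ) ≤ 3/4)
    (by norm_num : (3:ℝ)/4 < 1)
  have hle := seqNorm_le_of (fun k => alphaOf p J a k - alphaOf p J b k)
    (fun k => if 2 ≤ k then ((27:ℝ)/32) * |a-b| * (3/4)^k else 0) ?_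
    (by intro k; split <;> positivity) ?_
  · have h2 : ∑' k : ℕ, (if 2 ≤ k then ((27:ℝ)/32) * |a-b| * (3/4)^k else 0)
        = (243/128) * |a-b| := by
      rw [tsum_ite_const_mul (((27:ℝ)/32) * |a-b|) (by norm_num : (0:ℝ) ≤ 3/4)
        (by norm_num : (3:ℝ)/4 < 1)]
      norm_num
      ring
    rwa [h2] at hle
  · have e : (fun k : ℕ => if 2 ≤ k then ((27:ℝ)/32) * |a-b| * (3/4)^k else 0)
        = (fun k : ℕ => if 2 ≤ k then (((27:ℝ)/32) * |a-b|) * (3/4)^k else 0) := by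
      funext k; split <;> ring
    rw [e]; exact hsum
  · intro k hk
    rw [if_pos hk]
    unfold alphaOf
    rw [if_pos hk, if_pos hk]
    have hd := term_diff_bd hε0 hε8 hp0 hp1 hpB hJ ha hb phi2a phi2b k hk
    calc (2:ℝ)^k * |J k * p ^ k * phiF p a ^ k - J k * p ^ k * phiF p b ^ k|
        ≤ (2:ℝ)^k * ((243/128) * (k:ℝ) * 2^(k-1) * (8:ℝ)⁻¹ ^ k * |a - b|) := by
          apply mul_le_mul_of_nonneg_left hd (by positivity)
      _ = ((k:ℝ) * ((2:ℝ)^(k-1) * ((8:ℝ)⁻¹)^k * (2:ℝ)^k)) * ((243/128) * |a - b|) := by ring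
      _ ≤ ((8/9) * (3/4)^k * (1/2)) * ((243/128) * |a - b|) := by
          apply mul_le_mul_of_nonneg_right _ (by positivity)
          have e1 : (2:ℝ)^(k-1) * ((8:ℝ)⁻¹)^k * (2:ℝ)^k = (1/2) * (1/2)^k := by
            rw [pow_id2 k hk]
            rw [show (1:ℝ)/2 * ((1:ℝ)/4)^k * (2:ℝ)^k = (1/2) * ((2:ℝ)^k * ((1:ℝ)/4)^k) from by ring,
              pow_id3]
          rw [e1]
          have h2 := k_half_pow k hk
          calc (k:ℝ) * ((1:ℝ)/2 * (1/2)^k) = ((k:ℝ) * (1/2)^k) * (1/2) := by ring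
            _ ≤ ((8/9) * (3/4)^k) * (1/2) := by
                apply mul_le_mul_of_nonneg_right h2 (by norm_num)
            _ = (8/9) * (3/4)^k * (1/2) := by ring
      _ = ((27:ℝ)/32) * |a-b| * (3/4)^k := by ring

end core4

theorem stmt2 (p ε B : ℝ) (J : ℕ → ℝ)
    (hε0 : 0 < ε) (hε : ε < 1 / 2)
    (hcond1 : (1 / 2) * ((1 - 2 * ε)⁻¹) ^ 2 * (1 + 2 * ε) ≤ 1)
    (hcond2 : 6 * ε / (1 - 2 * ε) ≤ 1)
    (hp0 : 0 < p) (hp1 : p ≤ 1) (hB : 0 < B)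
    (hpB : ∀ k : ℕ, 2 ≤ k → p ^ (k - 1) * B ^ k ≤ ε * (8 : ℝ)⁻¹ ^ k)
    (hJ : ∀ k : ℕ, 2 ≤ k → |J k| ≤ B ^ k) :
    ∃ αstar : ℕ → ℝ,
      (αstar ∈ Sset p ε ∧ fMap p J αstar = αstar) ∧
      (∀ β ∈ Sset p ε, fMap p J β = β → β = αstar) ∧
      (∀ α ∈ Sset p ε,
        Filter.Tendsto (fun n : ℕ => seqNorm (fun k => (fMap p J)^[n] α k - αstar k))
          Filter.atTop (nhds 0)) := by
  have hε8 : ε ≤ 1/8 := by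
    have h2ε : 0 < 1 - 2*ε := by linarith
    rw [div_le_one h2ε] at hcond2
    linarith
  have hc1 : ((1 - 2*ε)⁻¹)^2 * (1 + 2*ε) ≤ 2 := by linarith
  have ht0 : 0 < p*ε := by positivity
  have phi2 : ∀ x : ℝ, |x| ≤ p*ε/2 → |phiF p x| ≤ 2 :=
    fun x hx => phi_bound hε0 hε hc1 hp0 hp1 hx
  haveI hne : Nonempty (Set.Icc (-(p*ε/2)) (p*ε/2)) :=
    ⟨⟨0, by constructor <;> nlinarith⟩⟩
  haveI : CompleteSpace (Set.Icc (-(p*ε/2)) (p*ε/2)) :=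
    isClosed_Icc.completeSpace_coe
  have memabs : ∀ x : (Set.Icc (-(p*ε/2)) (p*ε/2)), |x.1| ≤ p*ε/2 :=
    fun x => abs_le.mpr ⟨x.2.1, x.2.2⟩
  have hmem : ∀ a : ℝ, |a| ≤ p*ε/2 → hF p J a ∈ Set.Icc (-(p*ε/2)) (p*ε/2) := by
    intro a ha
    have h1 := hF_bound hp0 hε0 hpB hJ (phi2 a ha)
    have h2 := abs_le.mp (le_trans h1 (by linarith : p*ε/4 ≤ p*ε/2))
    exact ⟨h2.1, h2.2⟩
  set H : (Set.Icc (-(p*ε/2)) (p*ε/2)) → (Set.Icc (-(p*ε/2)) (p*ε/2)) :=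
    fun x => ⟨hF p J x.1, hmem x.1 (memabs x)⟩ with hH
  have hlip : LipschitzWith (243/256 : ℝ≥0) H := by
    apply LipschitzWith.of_dist_le_mul
    intro x y
    rw [Subtype.dist_eq, Real.dist_eq, Subtype.dist_eq, Real.dist_eq]
    have hco : ((243/256 : ℝ≥0) : ℝ) = 243/256 := by norm_num
    rw [hco]
    exact hF_lip hε0 hε8 hp0 hp1 hpB hJ (memabs x) (memabs y)
      (phi2 _ (memabs x)) (phi2 _ (memabs y))
  have hC : ContractingWith (243/256 : ℝ≥0) H := ⟨by rw [← NNReal.coe_lt_coe]; norm_num, hlip⟩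
  set afix := ContractingWith.fixedPoint H hC with hafix
  have hfixed : hF p J afix.1 = afix.1 := congrArg Subtype.val hC.fixedPoint_isFixedPt
  have hastarabs : |afix.1| ≤ p*ε/2 := memabs afix
  refine ⟨alphaOf p J afix.1, ⟨?_, ?_⟩, ?_, ?_⟩
  · show seqNorm (alphaOf p J afix.1) ≤ ENNReal.ofReal (p*ε)
    exact le_trans (alphaOf_norm hp0 hε0 hpB hJ (phi2 _ hastarabs))
      (ENNReal.ofReal_le_ofReal (by linarith))
  · rw [fMap_eq_alphaOf, seqA_alphaOf, hfixed]
  · intro β hβ hfixβ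
    have hfin : seqNorm β ≠ ⊤ := ne_top_of_le_ne_top ENNReal.ofReal_ne_top hβ
    have hsum := summable_rseq β hfin
    have hsle : ∑' k, rseq β k ≤ p*ε := by
      have h1 : seqNorm β ≤ ENNReal.ofReal (p*ε) := hβ
      rw [seqNorm_eq_ofReal β hsum] at h1
      rwa [ENNReal.ofReal_le_ofReal_iff (le_of_lt ht0)] at h1
    have hbabs : |seqA β| ≤ p*ε/2 := le_trans (abs_seqA_le β hsum) (by linarith)
    have hβ2 : β = alphaOf p J (seqA β) := by rw [← fMap_eq_alphaOf, hfixβ]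
    have hid : hF p J (seqA β) = seqA β := by
      conv_rhs => rw [hβ2, seqA_alphaOf]
    have hfb : H ⟨seqA β, ⟨(abs_le.mp hbabs).1, (abs_le.mp hbabs).2⟩⟩
        = ⟨seqA β, ⟨(abs_le.mp hbabs).1, (abs_le.mp hbabs).2⟩⟩ := Subtype.ext hid
    have heq := hC.fixedPoint_unique hfb
    have heq2 : seqA β = afix.1 := congrArg Subtype.val heq
    rw [hβ2, heq2]
  · intro α hα
    have hfin : seqNorm α ≠ ⊤ := ne_top_of_le_ne_top ENNReal.ofReal_ne_top hα
    have hsum := summable_rseq α hfin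
    have hsle : ∑' k, rseq α k ≤ p*ε := by
      have h1 : seqNorm α ≤ ENNReal.ofReal (p*ε) := hα
      rw [seqNorm_eq_ofReal α hsum] at h1
      rwa [ENNReal.ofReal_le_ofReal_iff (le_of_lt ht0)] at h1
    have ha0abs : |seqA α| ≤ p*ε/2 := le_trans (abs_seqA_le α hsum) (by linarith)
    have iter_eq : ∀ n : ℕ, (fMap p J)^[n+1] α
        = alphaOf p J ((H^[n] ⟨seqA α, ⟨(abs_le.mp ha0abs).1, (abs_le.mp ha0abs).2⟩⟩).1) := by
      intro n
      induction n with
      | zero =>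
        simp only [Function.iterate_one, Function.iterate_zero, id_eq]
        exact fMap_eq_alphaOf p J α
      | succ n ih =>
        rw [Function.iterate_succ_apply' (fMap p J) (n+1) α, ih, fMap_eq_alphaOf, seqA_alphaOf,
          Function.iterate_succ_apply' H n _]
    have htend := hC.tendsto_iterate_fixedPoint
      (⟨seqA α, ⟨(abs_le.mp ha0abs).1, (abs_le.mp ha0abs).2⟩⟩ :
        Set.Icc (-(p*ε/2)) (p*ε/2))
    have hdist : Filter.Tendsto
        (fun n => |(H^[n] ⟨seqA α, ⟨(abs_le.mp ha0abs).1, (abs_le.mp ha0abs).2⟩⟩).1 - afix.1|)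
        Filter.atTop (nhds 0) := by
      have h2 := tendsto_iff_dist_tendsto_zero.mp htend
      simpa [Subtype.dist_eq, Real.dist_eq] using h2
    have hbd : ∀ n : ℕ, seqNorm (fun k => (fMap p J)^[n+1] α k - alphaOf p J afix.1 k)
        ≤ ENNReal.ofReal ((243/128)
          * |(H^[n] ⟨seqA α, ⟨(abs_le.mp ha0abs).1, (abs_le.mp ha0abs).2⟩⟩).1 - afix.1|) := by
      intro n
      rw [iter_eq n]
      exact alphaOf_diff_norm hε0 hε8 hp0 hp1 hpB hJ (memabs _) hastarabs
        (phi2 _ (memabs _)) (phi2 _ hastarabs)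
    apply (Filter.tendsto_add_atTop_iff_nat 1).mp
    apply tendsto_of_tendsto_of_tendsto_of_le_of_le (tendsto_const_nhds) ?_
      (fun n => zero_le) (fun n => hbd n)
    have hup : Filter.Tendsto
        (fun n => (243/128)
          * |(H^[n] ⟨seqA α, ⟨(abs_le.mp ha0abs).1, (abs_le.mp ha0abs).2⟩⟩).1 - afix.1|)
        Filter.atTop (nhds 0) := by
      simpa using hdist.const_mul (243/128 : ℝ)
    have h2 := ENNReal.tendsto_ofReal hup
    simpa using h2
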